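/- arXiv:1405.1194 — 3 statements merged into one kernel-verified Lean document; each statement's English description precedes it below -/
import Mathlib

section
/- Any quantizer Q: V → ℝⁿ whose range has at most 2^R points has worst-case distortion sup_{x∈V} ‖x − Q(x)‖₂ ≥ (vol(V)·Γ(1+n/2)/π^{n/2})^{1/n} · 2^{-R/n}. -/
open MeasureTheory

/-- Any quantizer `Q : V → ℝⁿ` whose range has at most `2^R` points has worst-case
distortion at least `(vol(V)·Γ(1+n/2)/π^{n/2})^{1/n} · 2^{-R/n}`. -/
theorem stmt_1 (n R : ℕ) (hn : 0 < n) (hR : 0 < R)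
    (V : Set (EuclideanSpace ℝ (Fin n)))
    (hVb : Bornology.IsBounded V) (hVm : MeasurableSet V) (hVpos : 0 < volume V)
    (Q : EuclideanSpace ℝ (Fin n) → EuclideanSpace ℝ (Fin n))
    (S : Finset (EuclideanSpace ℝ (Fin n))) (hQS : Q '' V ⊆ S) (hcard : S.card ≤ 2 ^ R) :
    ((volume V).toReal * Real.Gamma (1 + (n : ℝ) / 2) / Real.pi ^ ((n : ℝ) / 2)) ^ ((1 : ℝ) / n)
      * 2 ^ (-(R : ℝ) / n) ≤ sSup {d : ℝ | ∃ x ∈ V, d = dist x (Q x)} := by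
  haveI : Nonempty (Fin n) := ⟨⟨0, hn⟩⟩
  set Dset := {d : ℝ | ∃ x ∈ V, d = dist x (Q x)} with hDset
  set D := sSup Dset with hD
  -- V is nonempty
  have hVne : V.Nonempty := by
    by_contra h
    rw [Set.not_nonempty_iff_eq_empty] at h
    simp [h] at hVpos
  obtain ⟨x₀, hx₀⟩ := hVne
  -- Dset is bounded above
  obtain ⟨M, hM⟩ := hVb.subset_closedBall 0
  obtain ⟨M', hM'⟩ := (S.finite_toSet.isBounded).subset_closedBall 0
  have hbdd : BddAbove Dset := by
    refine ⟨M + M', fun d hd => ?_⟩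
    obtain ⟨x, hx, rfl⟩ := hd
    have h1 : dist x 0 ≤ M := hM hx
    have h2 : dist (Q x) 0 ≤ M' := hM' (hQS ⟨x, hx, rfl⟩)
    calc dist x (Q x) ≤ dist x 0 + dist 0 (Q x) := dist_triangle _ _ _
      _ ≤ M + M' := by rw [dist_comm 0]; exact add_le_add h1 h2
  have hDmem : ∀ x ∈ V, dist x (Q x) ≤ D := fun x hx => le_csSup hbdd ⟨x, hx, rfl⟩
  have hD0 : 0 ≤ D := le_trans dist_nonneg (hDmem x₀ hx₀)
  -- covering
  have hcover : V ⊆ ⋃ s ∈ S, Metric.closedBall s D := by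
    intro x hx
    exact Set.mem_biUnion (hQS ⟨x, hx, rfl⟩) (by simpa [Metric.mem_closedBall, dist_comm] using hDmem x hx)
  have hvol : volume V ≤ (S.card : ENNReal) * ((ENNReal.ofReal D) ^ n *
      ENNReal.ofReal (Real.sqrt Real.pi ^ n / Real.Gamma (n / 2 + 1))) := by
    calc volume V ≤ volume (⋃ s ∈ S, Metric.closedBall s D) := measure_mono hcover
      _ ≤ ∑ s ∈ S, volume (Metric.closedBall s D) := measure_biUnion_finset_le S _
      _ = (S.card : ENNReal) * ((ENNReal.ofReal D) ^ n *
          ENNReal.ofReal (Real.sqrt Real.pi ^ n / Real.Gamma (n / 2 + 1))) := by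
        simp [EuclideanSpace.volume_closedBall, Finset.sum_const, nsmul_eq_mul]
  -- real-valued bound
  have hGpos : 0 < Real.Gamma ((n : ℝ) / 2 + 1) :=
    Real.Gamma_pos_of_pos (by positivity)
  have hkey : (volume V).toReal ≤ (2 ^ R : ℝ) * (D ^ n * (Real.sqrt Real.pi ^ n / Real.Gamma (n / 2 + 1))) := by
    have hfin : ((S.card : ENNReal) * ((ENNReal.ofReal D) ^ n *
        ENNReal.ofReal (Real.sqrt Real.pi ^ n / Real.Gamma (n / 2 + 1)))) ≠ ⊤ :=
      ENNReal.mul_ne_top (ENNReal.natCast_ne_top _)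
        (ENNReal.mul_ne_top (ENNReal.pow_ne_top ENNReal.ofReal_ne_top) ENNReal.ofReal_ne_top)
    have := ENNReal.toReal_mono hfin hvol
    rw [ENNReal.toReal_mul, ENNReal.toReal_mul, ENNReal.toReal_pow,
      ENNReal.toReal_ofReal hD0, ENNReal.toReal_ofReal (by positivity)] at this
    refine this.trans ?_
    have hS : (S.card : ℝ) ≤ (2 : ℝ) ^ R := by exact_mod_cast hcard
    exact mul_le_mul_of_nonneg_right hS (by positivity)
  -- rewrite sqrt π ^ n as π ^ (n/2)
  have hsqrt : Real.sqrt Real.pi ^ n = Real.pi ^ ((n : ℝ) / 2) := by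
    rw [← Real.rpow_natCast (Real.sqrt Real.pi) n, Real.rpow_natCast,
      ← Real.rpow_natCast (Real.sqrt Real.pi) n,
      Real.sqrt_eq_rpow, ← Real.rpow_mul Real.pi_pos.le]
    ring_nf
  have hpipos : (0 : ℝ) < Real.pi ^ ((n : ℝ) / 2) := Real.rpow_pos_of_pos Real.pi_pos _
  set A := (volume V).toReal * Real.Gamma (1 + (n : ℝ) / 2) / Real.pi ^ ((n : ℝ) / 2) with hA
  have hA0 : 0 ≤ A := by
    have := ENNReal.toReal_nonneg (a := volume V)
    have hG' : 0 < Real.Gamma (1 + (n : ℝ) / 2) := by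
      rw [add_comm]; exact hGpos
    positivity
  -- A / 2^R ≤ D^n
  have hmain : A / (2 : ℝ) ^ R ≤ D ^ n := by
    rw [hA, div_le_iff₀ (by positivity), div_le_iff₀ hpipos]
    have h1 : Real.Gamma (1 + (n : ℝ) / 2) = Real.Gamma ((n : ℝ) / 2 + 1) := by rw [add_comm]
    rw [h1]
    calc (volume V).toReal * Real.Gamma ((n : ℝ) / 2 + 1)
        ≤ ((2 : ℝ) ^ R * (D ^ n * (Real.sqrt Real.pi ^ n / Real.Gamma (n / 2 + 1)))) *
            Real.Gamma ((n : ℝ) / 2 + 1) := mul_le_mul_of_nonneg_right hkey hGpos.le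
      _ = D ^ n * (2 : ℝ) ^ R * Real.pi ^ ((n : ℝ) / 2) := by
          rw [← hsqrt]; field_simp
  -- conclude with rpow
  have hn' : (n : ℝ) ≠ 0 := Nat.cast_ne_zero.mpr hn.ne'
  have hfinal : (A / (2 : ℝ) ^ R) ^ ((1 : ℝ) / n) ≤ D := by
    have h := Real.rpow_le_rpow (by positivity) hmain (by positivity : (0:ℝ) ≤ 1 / n)
    rwa [← Real.rpow_natCast D n, ← Real.rpow_mul hD0, mul_one_div,
      div_self hn', Real.rpow_one] at h
  refine le_trans (le_of_eq ?_) hfinal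
  have h2 : ((2 : ℝ) ^ R) ^ ((1 : ℝ) / n) = (2 : ℝ) ^ ((R : ℝ) / n) := by
    rw [← Real.rpow_natCast (2 : ℝ) R, ← Real.rpow_mul (by norm_num : (0:ℝ) ≤ 2), mul_one_div]
  rw [Real.div_rpow hA0 (by positivity), h2, neg_div,
    Real.rpow_neg (by norm_num : (0:ℝ) ≤ 2), ← div_eq_mul_inv]
end

section
/- Consider the greedy r-th order Σ∆ scheme with the 2L-level midrise scalar quantizer Q with step Δ (codebook {(±j − 1/2)Δ : j = 1,…,L}, mapping each real to its closest codebook element, saturating at (±L∓1/2)Δ). If the input sequence c satisfies ‖c‖_∞ ≤ Δ(L − 2^{r−1} + 1/2), then the state variable sequence u of the scheme satisfies ‖u‖_∞ ≤ Δ/2, i.e., the scheme is stable. -/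
open Finset

lemma sum_pow_aux (j r : ℕ) : (∑ k ∈ Finset.Icc (j+1) r, (2:ℝ)^(r-k)) = 2^(r-j) - 1 := by
  rcases le_or_gt j r with hj | hj
  · have h1 : (∑ k ∈ Finset.Icc (j+1) r, (2:ℝ)^(r-k))
        = ∑ m ∈ Finset.range (r-j), (2:ℝ)^m := by
      apply Finset.sum_nbij' (fun k => r - k) (fun m => r - m)
      · intro a ha; simp only [Finset.mem_Icc] at ha; simp only [Finset.mem_range]; omega
      · intro a ha; simp only [Finset.mem_range] at ha; simp only [Finset.mem_Icc]; omega
      · intro a ha; simp only [Finset.mem_Icc] at ha; omega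
      · intro a ha; simp only [Finset.mem_range] at ha; omega
      · intro a ha; rfl
    rw [h1, geom_sum_eq (by norm_num)]
    norm_num
  · rw [Finset.Icc_eq_empty (by omega)]
    have : r - j = 0 := by omega
    simp [this]

/-- Stability of the greedy `r`-th order Σ∆ scheme with the `2L`-level midrise quantizer
of step `Δ`: if `‖c‖_∞ ≤ Δ(L − 2^{r−1} + 1/2)` then the state variables satisfy
`‖u‖_∞ ≤ Δ/2`.  Here `u i j` denotes the auxiliary state variable `u_i^{(j)}`,
`u_i := u_i^{(r)}`, and the scalar quantizer `Q` satisfies `|t − Q(t)| ≤ Δ/2` whenever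
`|t| ≤ LΔ`. -/
theorem stmt_9 (r L : ℕ) (hr : 1 ≤ r) (hL : 1 ≤ L) (Δ : ℝ) (hΔ : 0 < Δ)
    (Q : ℝ → ℝ) (hQ : ∀ t : ℝ, |t| ≤ L * Δ → |t - Q t| ≤ Δ / 2)
    (c q : ℕ → ℝ) (u : ℕ → ℕ → ℝ)
    (hu0 : ∀ j, u 0 j = 0)
    (hq : ∀ i, 1 ≤ i → q i = Q ((∑ j ∈ Finset.Icc 1 r, u (i - 1) j) + c i))
    (huaux0 : ∀ i, 1 ≤ i → u i 0 = c i - q i)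
    (huaux : ∀ i, 1 ≤ i → ∀ j ∈ Finset.Icc 1 r, u i j = u (i - 1) j + u i (j - 1))
    (hc : ∀ i, 1 ≤ i → |c i| ≤ Δ * (L - 2 ^ (r - 1) + 1 / 2)) :
    ∀ i, |u i r| ≤ Δ / 2 := by
  have key : ∀ i, ∀ j ∈ Finset.Icc 1 r, |u i j| ≤ 2^(r-j) * (Δ/2) := by
    intro i
    induction i with
    | zero =>
      intro j hj
      rw [hu0 j]
      simp only [abs_zero]
      positivity
    | succ n ih =>
      set i := n + 1 with hi
      have hi1 : 1 ≤ i := by omega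
      have him : i - 1 = n := by omega
      set s : ℝ := ∑ j ∈ Finset.Icc 1 r, u n j with hs
      -- bound on s
      have hsum_bound : |s| ≤ (2^r - 1) * (Δ/2) := by
        calc |s| ≤ ∑ j ∈ Finset.Icc 1 r, |u n j| := Finset.abs_sum_le_sum_abs _ _
          _ ≤ ∑ j ∈ Finset.Icc 1 r, 2^(r-j) * (Δ/2) := Finset.sum_le_sum ih
          _ = (∑ j ∈ Finset.Icc 1 r, (2:ℝ)^(r-j)) * (Δ/2) := by rw [Finset.sum_mul]
          _ = (2^(r-0) - 1) * (Δ/2) := by rw [← sum_pow_aux 0 r]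
          _ = (2^r - 1) * (Δ/2) := by norm_num
      -- bound on the argument of Q
      have h2r : (2:ℝ)^r = 2 * 2^(r-1) := by
        rw [← pow_succ']
        congr 1
        omega
      have harg : |s + c i| ≤ L * Δ := by
        have h1 := hc i hi1
        calc |s + c i| ≤ |s| + |c i| := abs_add_le _ _
          _ ≤ (2^r - 1) * (Δ/2) + Δ * (L - 2^(r-1) + 1/2) := add_le_add hsum_bound h1
          _ = L * Δ + (Δ/2) * ((2:ℝ)^r - 2 * 2^(r-1)) := by ring
          _ = L * Δ := by rw [h2r]; ring
      set e : ℝ := (s + c i) - Q (s + c i) with he_def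
      have he : |e| ≤ Δ / 2 := hQ _ harg
      have hqi : q i = Q (s + c i) := by rw [hq i hi1, him]
      -- key formula
      have formula : ∀ j, 1 ≤ j → j ≤ r → u i j = e - ∑ k ∈ Finset.Icc (j+1) r, u n k := by
        intro j hj1
        induction j, hj1 using Nat.le_induction with
        | base =>
          intro h1r
          have hsplit : Finset.Icc 1 r = insert 1 (Finset.Icc 2 r) := by
            ext x; simp only [Finset.mem_Icc, Finset.mem_insert]; omega
          have hnotin : (1:ℕ) ∉ Finset.Icc 2 r := by simp
          have hs2 : s = u n 1 + ∑ k ∈ Finset.Icc 2 r, u n k := by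
            rw [hs, hsplit, Finset.sum_insert hnotin]
          have h := huaux i hi1 1 (by simp [Finset.mem_Icc]; omega)
          rw [him] at h
          rw [h]
          simp only [Nat.sub_self]
          rw [huaux0 i hi1, hqi, he_def, hs2]
          ring
        | succ j hj1 ihj =>
          intro hjr
          have hprev := ihj (by omega)
          have h := huaux i hi1 (j+1) (by simp [Finset.mem_Icc]; omega)
          rw [him] at h
          simp only [Nat.add_sub_cancel] at h
          have hsplit : Finset.Icc (j+1) r = insert (j+1) (Finset.Icc (j+2) r) := by
            ext x; simp only [Finset.mem_Icc, Finset.mem_insert]; omega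
          have hnotin : j+1 ∉ Finset.Icc (j+2) r := by simp
          rw [h, hprev, hsplit, Finset.sum_insert hnotin]
          ring
      -- conclude
      intro j hj
      simp only [Finset.mem_Icc] at hj
      rw [formula j hj.1 hj.2]
      calc |e - ∑ k ∈ Finset.Icc (j+1) r, u n k|
          ≤ |e| + |∑ k ∈ Finset.Icc (j+1) r, u n k| := abs_sub _ _
        _ ≤ Δ/2 + ∑ k ∈ Finset.Icc (j+1) r, |u n k| :=
            add_le_add he (Finset.abs_sum_le_sum_abs _ _)
        _ ≤ Δ/2 + ∑ k ∈ Finset.Icc (j+1) r, 2^(r-k) * (Δ/2) := by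
            apply add_le_add (le_refl _)
            apply Finset.sum_le_sum
            intro k hk
            apply ih
            simp only [Finset.mem_Icc] at hk ⊢
            omega
        _ = Δ/2 + (2^(r-j) - 1) * (Δ/2) := by
            rw [← Finset.sum_mul, sum_pow_aux j r]
        _ = 2^(r-j) * (Δ/2) := by ring
  intro i
  rcases Nat.eq_zero_or_pos i with h0 | hpos
  · rw [h0, hu0 r]; simp; positivity
  · have := key i r (by simp [Finset.mem_Icc]; omega)
    simpa [Nat.sub_self] using this
end

section
/- Let Φ ∈ ℝ^{n×N} be a frame (full row rank), r ≥ 1, and D the N×N first-difference matrix. Then the r-th order Sobolev dual Φ̃^{(r)} := (D^{−r}Φᵀ)† D^{−r} (interpreted appropriately as an n×N matrix) is a dual frame of Φ, i.e., Φ̃^{(r)} Φᵀ = I_n, and among all dual frames Φ̃ of Φ it minimizes the operator norm ‖Φ̃ D^r‖_{2→2}. -/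
open Matrix
/-- The ℓ₂ → ℓ₂ operator norm of a real matrix. -/
noncomputable def matOpNorm {a b : ℕ} (M : Matrix (Fin a) (Fin b) ℝ) : ℝ :=
  ‖LinearMap.toContinuousLinearMap (Matrix.toEuclideanLin M)‖

/-- Moore–Penrose pseudoinverse of a full-column-rank matrix. -/
noncomputable def pinv {a b : ℕ} (M : Matrix (Fin a) (Fin b) ℝ) : Matrix (Fin b) (Fin a) ℝ :=
  (Mᵀ * M)⁻¹ * Mᵀ

/-- A square real matrix of full rank is a unit. -/
lemma aux_isUnit_of_rank {k : ℕ} (A : Matrix (Fin k) (Fin k) ℝ) (h : A.rank = k) : IsUnit A := by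
  rw [← Matrix.mulVec_surjective_iff_isUnit]
  have hrange : LinearMap.range A.mulVecLin = ⊤ := by
    apply Submodule.eq_top_of_finrank_eq
    rw [show Module.finrank ℝ (LinearMap.range A.mulVecLin) = A.rank from rfl, h]
    simp [Module.finrank_fintype_fun_eq_card]
  intro v
  obtain ⟨w, hw⟩ := LinearMap.range_eq_top.mp hrange v
  exact ⟨w, hw⟩

lemma aux_toEuclideanLin_mul {a b c : ℕ} (A : Matrix (Fin a) (Fin b) ℝ)
    (B : Matrix (Fin b) (Fin c) ℝ) :
    Matrix.toEuclideanLin (A * B) =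
      (Matrix.toEuclideanLin A).comp (Matrix.toEuclideanLin B) := by
  rw [Matrix.toEuclideanLin_eq_toLin,
    Matrix.toLin_mul (PiLp.basisFun 2 ℝ (Fin c)) (PiLp.basisFun 2 ℝ (Fin b))
      (PiLp.basisFun 2 ℝ (Fin a))]
  rfl

lemma aux_matOpNorm_mul_le {a b c : ℕ} (A : Matrix (Fin a) (Fin b) ℝ)
    (B : Matrix (Fin b) (Fin c) ℝ) :
    matOpNorm (A * B) ≤ matOpNorm A * matOpNorm B := by
  unfold matOpNorm
  have h : LinearMap.toContinuousLinearMap (Matrix.toEuclideanLin (A * B)) =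
      (LinearMap.toContinuousLinearMap (Matrix.toEuclideanLin A)).comp
        (LinearMap.toContinuousLinearMap (Matrix.toEuclideanLin B)) := by
    ext x
    simp [aux_toEuclideanLin_mul]
  rw [h]
  exact ContinuousLinearMap.opNorm_comp_le _ _

lemma aux_matOpNorm_nonneg {a b : ℕ} (A : Matrix (Fin a) (Fin b) ℝ) : 0 ≤ matOpNorm A :=
  norm_nonneg _

/-- A symmetric idempotent matrix has operator norm at most 1. -/
lemma aux_proj_norm_le_one {k : ℕ} (P : Matrix (Fin k) (Fin k) ℝ)
    (hsymm : Pᵀ = P) (hidem : P * P = P) : matOpNorm P ≤ 1 := by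
  unfold matOpNorm
  apply ContinuousLinearMap.opNorm_le_bound _ zero_le_one
  intro x
  rw [one_mul]
  set f := Matrix.toEuclideanLin P with hf
  have hPH : Pᴴ = P := by
    have h' : Pᴴ = Pᵀ := by ext i j; simp [Matrix.conjTranspose_apply]
    rw [h', hsymm]
  have hadj : LinearMap.adjoint f = f := by
    rw [hf, ← Matrix.toEuclideanLin_conjTranspose_eq_adjoint, hPH]
  have hff : ∀ y, f (f y) = f y := by
    intro y
    have := aux_toEuclideanLin_mul P P
    rw [hidem] at this
    exact (congrFun (congrArg DFunLike.coe this) y).symm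
  have key : ‖f x‖ * ‖f x‖ ≤ ‖x‖ * ‖f x‖ := by
    have h1 : (inner ℝ (f x) (f x) : ℝ) = inner ℝ (f x) x := by
      calc (inner ℝ (f x) (f x) : ℝ) = inner ℝ (LinearMap.adjoint f (f x)) x := by
            rw [LinearMap.adjoint_inner_left]
        _ = inner ℝ (f (f x)) x := by rw [hadj]
        _ = inner ℝ (f x) x := by rw [hff]
    calc ‖f x‖ * ‖f x‖ = (inner ℝ (f x) (f x) : ℝ) := (real_inner_self_eq_norm_mul_norm _).symm
      _ = inner ℝ (f x) x := h1
      _ ≤ ‖f x‖ * ‖x‖ := real_inner_le_norm _ _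
      _ = ‖x‖ * ‖f x‖ := mul_comm _ _
  rcases eq_or_lt_of_le (norm_nonneg (f x)) with h0 | h0
  · rw [show ‖(LinearMap.toContinuousLinearMap f) x‖ = ‖f x‖ from rfl, ← h0]
    exact norm_nonneg x
  · have := (mul_le_mul_iff_of_pos_right h0).mp key
    exact this

/-- The `r`-th order Sobolev dual `Φ̃^{(r)} = (D^{−r}Φᵀ)† D^{−r}` of a full-row-rank frame
`Φ` is a dual frame of `Φ`, and among all dual frames it minimizes `‖Φ̃ D^r‖_{2→2}`. -/
theorem stmt_11 (n N : ℕ) (hn : 0 < n) (r : ℕ) (hr : 1 ≤ r)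
    (Φ : Matrix (Fin n) (Fin N) ℝ) (hrank : Φ.rank = n)
    (D : Matrix (Fin N) (Fin N) ℝ)
    (hD : ∀ i j : Fin N, D i j =
      if (i : ℕ) = j then 1 else if (j : ℕ) + 1 = i then -1 else 0)
    (Φd : Matrix (Fin n) (Fin N) ℝ)
    (hΦd : Φd = pinv ((D⁻¹) ^ r * Φ.transpose) * (D⁻¹) ^ r) :
    Φd * Φ.transpose = 1 ∧
    ∀ G : Matrix (Fin n) (Fin N) ℝ, G * Φ.transpose = 1 →
      matOpNorm (Φd * D ^ r) ≤ matOpNorm (G * D ^ r) := by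
  -- D is lower triangular with unit diagonal, hence det D = 1
  have hDtri : D.BlockTriangular OrderDual.toDual := by
    intro i j hij
    have hij' : (i : Fin N) < j := hij
    have hlt : (i : ℕ) < (j : ℕ) := hij'
    rw [hD]
    have h1 : (i : ℕ) ≠ (j : ℕ) := Nat.ne_of_lt hlt
    have h2 : (j : ℕ) + 1 ≠ (i : ℕ) := by omega
    simp [h1, h2]
  have hdetD : D.det = 1 := by
    rw [Matrix.det_of_lowerTriangular D hDtri]
    have : ∀ i : Fin N, D i i = 1 := by intro i; rw [hD]; simp
    simp [this]
  have hDunit : IsUnit D.det := by rw [hdetD]; exact isUnit_one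
  have hDinvD : D⁻¹ * D = 1 := Matrix.nonsing_inv_mul D hDunit
  have hDDinv : D * D⁻¹ = 1 := Matrix.mul_nonsing_inv D hDunit
  have hcomm : Commute D⁻¹ D := by
    unfold Commute SemiconjBy; rw [hDinvD, hDDinv]
  set E : Matrix (Fin N) (Fin N) ℝ := (D⁻¹) ^ r with hE
  have hE1 : E * D ^ r = 1 := by
    rw [hE, ← hcomm.mul_pow, hDinvD, one_pow]
  have hE2 : D ^ r * E = 1 := by
    rw [hE, ← hcomm.symm.mul_pow, hDDinv, one_pow]
  have hEunit : IsUnit E := ⟨⟨E, D ^ r, hE1, hE2⟩, rfl⟩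
  have hEdet : IsUnit E.det := Matrix.isUnit_iff_isUnit_det E |>.mp hEunit
  set M : Matrix (Fin N) (Fin n) ℝ := E * Φᵀ with hM
  have hrankM : M.rank = n := by
    rw [hM, Matrix.rank_mul_eq_right_of_isUnit_det E Φᵀ hEdet, Matrix.rank_transpose, hrank]
  have hMMunit : IsUnit (Mᵀ * M) := by
    apply aux_isUnit_of_rank
    rw [Matrix.rank_transpose_mul_self, hrankM]
  have hMMdet : IsUnit (Mᵀ * M).det := Matrix.isUnit_iff_isUnit_det _ |>.mp hMMunit
  have hMMinv : (Mᵀ * M)⁻¹ * (Mᵀ * M) = 1 := Matrix.nonsing_inv_mul _ hMMdet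
  -- Part 1
  have part1 : Φd * Φᵀ = 1 := by
    have h' : Φd * Φᵀ = pinv M * (E * Φᵀ) := by rw [hΦd, Matrix.mul_assoc]
    rw [h', ← hM]
    show (Mᵀ * M)⁻¹ * Mᵀ * M = 1
    rw [Matrix.mul_assoc, hMMinv]
  refine ⟨part1, ?_⟩
  -- Part 2
  intro G hG
  set L : Matrix (Fin n) (Fin N) ℝ := G * D ^ r with hL
  have hLM : L * M = 1 := by
    rw [hL, hM, Matrix.mul_assoc, ← Matrix.mul_assoc (D ^ r) E Φᵀ, hE2, Matrix.one_mul, hG]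
  set Q : Matrix (Fin n) (Fin n) ℝ := (Mᵀ * M)⁻¹ with hQ
  set P : Matrix (Fin N) (Fin N) ℝ := M * (Q * Mᵀ) with hP
  have hQsymm : Qᵀ = Q := by
    rw [hQ, Matrix.transpose_nonsing_inv]
    congr 1
    rw [Matrix.transpose_mul, Matrix.transpose_transpose]
  have hPsymm : Pᵀ = P := by
    rw [hP, Matrix.transpose_mul, Matrix.transpose_mul, Matrix.transpose_transpose, hQsymm,
      Matrix.mul_assoc]
  have hMMQ : Mᵀ * M * Q = 1 := by rw [hQ]; exact Matrix.mul_nonsing_inv _ hMMdet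
  have hmid : Mᵀ * (M * (Q * Mᵀ)) = Mᵀ := by
    rw [← Matrix.mul_assoc, ← Matrix.mul_assoc, hMMQ, Matrix.one_mul]
  have hPidem : P * P = P := by
    rw [hP]
    simp only [Matrix.mul_assoc]
    rw [hmid]
  have hLP : L * P = pinv M := by
    rw [hP, ← Matrix.mul_assoc, hLM, Matrix.one_mul]
    show Q * Mᵀ = pinv M
    rw [hQ]; rfl
  have hΦdD : Φd * D ^ r = pinv M := by
    rw [hΦd, Matrix.mul_assoc, hE1, Matrix.mul_one]
  rw [hΦdD, ← hLP]
  calc matOpNorm (L * P) ≤ matOpNorm L * matOpNorm P := aux_matOpNorm_mul_le L P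
    _ ≤ matOpNorm L * 1 :=
        mul_le_mul_of_nonneg_left (aux_proj_norm_le_one P hPsymm hPidem) (aux_matOpNorm_nonneg L)
    _ = matOpNorm (G * D ^ r) := by rw [mul_one, hL]
end
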